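/- arXiv:2303.04113 — 4 statements merged into one kernel-verified Lean document; each statement's English description precedes it below -/
import Mathlib

section
/- For positive integers k and m, k^m = \sum_{i=0}^{m-1} A(m,i) * C(k+i, m), where A(m,i) is the Eulerian number counting permutations of [m] with exactly i descents (Worpitzky's identity). -/
set_option maxHeartbeats 1000000


open Finset

noncomputable section

/-- The value of the permutation `p` of `Fin m` at position `j`, read in one-line
notation (0-indexed), extended by `0` outside the range. -/
def permVal {m : ℕ} (p : Equiv.Perm (Fin m)) (j : ℕ) : ℕ :=
  if h : j < m then (p ⟨j, h⟩ : ℕ) else 0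

/-- The number of descents of the permutation `p` of `Fin m`, in one-line notation. -/
def desNum {m : ℕ} (p : Equiv.Perm (Fin m)) : ℕ :=
  ((Finset.range (m - 1)).filter fun j => permVal p (j + 1) < permVal p j).card

/-- The Eulerian number `A(m, i)`: the number of permutations of an `m`-element set
with exactly `i` descents. -/
def eulerian (m i : ℕ) : ℕ :=
  (Finset.univ.filter fun p : Equiv.Perm (Fin m) => desNum p = i).card

/-! ### Auxiliary definitions and lemmas -/

/-- Number of ascents of `p` among positions `< j`. -/
def ascCount {m : ℕ} (p : Equiv.Perm (Fin m)) (j : ℕ) : ℕ :=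
  ((Finset.range j).filter fun i => permVal p i < permVal p (i + 1)).card

lemma permVal_of_lt {m : ℕ} (p : Equiv.Perm (Fin m)) {j : ℕ} (h : j < m) :
    permVal p j = (p ⟨j, h⟩ : ℕ) := dif_pos h

lemma ascCount_mono {m : ℕ} (p : Equiv.Perm (Fin m)) {j₁ j₂ : ℕ} (h : j₁ ≤ j₂) :
    ascCount p j₁ ≤ ascCount p j₂ :=
  Finset.card_le_card (Finset.filter_subset_filter _ (Finset.range_subset_range.2 h))

lemma ascCount_succ {m : ℕ} (p : Equiv.Perm (Fin m)) (i : ℕ) :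
    ascCount p (i + 1) =
      ascCount p i + if permVal p i < permVal p (i + 1) then 1 else 0 := by
  unfold ascCount
  rw [Finset.range_add_one, Finset.filter_insert]
  split
  · rw [Finset.card_insert_of_notMem (by simp)]
  · rw [Nat.add_zero]

lemma ascCount_succ_le {m : ℕ} (p : Equiv.Perm (Fin m)) (i : ℕ) :
    ascCount p (i + 1) ≤ ascCount p i + 1 := by
  rw [ascCount_succ]; split <;> omega

lemma ascCount_zero {m : ℕ} (p : Equiv.Perm (Fin m)) : ascCount p 0 = 0 := by
  simp [ascCount]

/-- For `i, i+1` both valid positions, the values are distinct. -/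
lemma permVal_ne {n : ℕ} (p : Equiv.Perm (Fin (n + 1))) {i : ℕ} (hi : i < n) :
    permVal p i ≠ permVal p (i + 1) := by
  rw [permVal_of_lt p (by omega : i < n + 1), permVal_of_lt p (by omega : i + 1 < n + 1)]
  intro h
  have := p.injective (Fin.val_injective h)
  simp only [Fin.mk.injEq] at this
  omega

lemma desNum_add_ascCount {n : ℕ} (p : Equiv.Perm (Fin (n + 1))) :
    desNum p + ascCount p n = n := by
  have h1 : ascCount p n
      = ((Finset.range n).filter fun i => ¬ permVal p (i + 1) < permVal p i).card := by
    unfold ascCount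
    congr 1
    apply Finset.filter_congr
    intro i hi
    have hi' := Finset.mem_range.1 hi
    have hne := permVal_ne p hi'
    simp only [eq_iff_iff, not_lt]
    omega
  have h2 : desNum p = ((Finset.range n).filter
      fun j => permVal p (j + 1) < permVal p j).card := by
    unfold desNum
    norm_num
  rw [h2, h1, Finset.card_filter_add_card_filter_not, Finset.card_range]

lemma ascCount_le {n : ℕ} (p : Equiv.Perm (Fin (n + 1))) {j : ℕ} (h : j ≤ n) :
    ascCount p j ≤ ascCount p n := ascCount_mono p h

lemma permVal_castSucc {n : ℕ} (p : Equiv.Perm (Fin (n + 1))) (i : Fin n) :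
    permVal p (i : ℕ) = (p i.castSucc : ℕ) := permVal_of_lt p _

lemma permVal_succ {n : ℕ} (p : Equiv.Perm (Fin (n + 1))) (i : Fin n) :
    permVal p ((i : ℕ) + 1) = (p i.succ : ℕ) := permVal_of_lt p _

/-- Characterization of the fiber of the stable sort over a permutation `p`. -/
lemma sort_eq_iff_adj {n k : ℕ} (p : Equiv.Perm (Fin (n + 1))) (f : Fin (n + 1) → Fin k) :
    Tuple.sort f = p ↔ ∀ i : Fin n,
      f (p i.castSucc) ≤ f (p i.succ) ∧
        (p i.succ < p i.castSucc → f (p i.castSucc) < f (p i.succ)) := by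
  rw [eq_comm, Tuple.eq_sort_iff]
  constructor
  · rintro ⟨hmono, hlex⟩ i
    have hle : f (p i.castSucc) ≤ f (p i.succ) := hmono (Fin.castSucc_lt_succ (i := i)).le
    refine ⟨hle, fun hps => ?_⟩
    rcases lt_or_eq_of_le hle with h | h
    · exact h
    · exact absurd (hlex _ _ (Fin.castSucc_lt_succ (i := i)) h) (asymm hps)
  · intro hadj
    have hmono : Monotone (f ∘ p) :=
      Fin.monotone_iff_le_succ.2 fun i => (hadj i).1
    have hadjlt : ∀ i : Fin n, f (p i.castSucc) = f (p i.succ) → p i.castSucc < p i.succ := by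
      intro i heq
      rcases lt_trichotomy (p i.castSucc) (p i.succ) with h | h | h
      · exact h
      · exact absurd (p.injective h) (Fin.castSucc_lt_succ (i := i)).ne
      · exact absurd ((hadj i).2 h) (by simp [heq])
    refine ⟨hmono, ?_⟩
    have hmono' : ∀ {x y : Fin (n + 1)}, x ≤ y → f (p x) ≤ f (p y) := fun h => hmono h
    have key : ∀ j i : Fin (n + 1), i < j → f (p i) = f (p j) → p i < p j := by
      intro j
      induction j using Fin.induction with
      | zero => exact fun i hi _ => absurd hi (Fin.not_lt_zero i)
      | succ b ih =>
        intro i hi heq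
        have hib : i ≤ b.castSucc := by
          rw [Fin.lt_def, Fin.val_succ] at hi
          rw [Fin.le_def, Fin.coe_castSucc]
          omega
        rcases eq_or_lt_of_le hib with rfl | hlt
        · exact hadjlt b heq
        · have h1 : f (p i) ≤ f (p b.castSucc) := hmono' hib
          have h2 : f (p b.castSucc) ≤ f (p b.succ) := hmono' (Fin.castSucc_lt_succ (i := b)).le
          have heq1 : f (p i) = f (p b.castSucc) := le_antisymm h1 (h2.trans heq.ge)
          have heq2 : f (p b.castSucc) = f (p b.succ) := le_antisymm h2 (heq.ge.trans h1)
          exact (ih i hlt heq1).trans (hadjlt b heq2)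
    intro i j hij heq
    exact key j i hij heq

/-- The number of strictly monotone maps `Fin r → Fin N` is `N.choose r`. -/
lemma cardStrictMonoAux (r N : ℕ) :
    Nat.card {h : Fin r → Fin N // StrictMono h} = N.choose r := by
  have e : {h : Fin r → Fin N // StrictMono h} ≃ {s : Finset (Fin N) // s.card = r} :=
    { toFun := fun h => ⟨Finset.univ.image h.1, by
        rw [Finset.card_image_of_injective _ h.2.injective, Finset.card_univ,
          Fintype.card_fin]⟩
      invFun := fun s => ⟨fun i => s.1.orderEmbOfFin s.2 i, (s.1.orderEmbOfFin s.2).strictMono⟩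
      left_inv := by
        rintro ⟨h, hh⟩
        apply Subtype.ext
        exact (Finset.orderEmbOfFin_unique _
          (fun x => Finset.mem_image_of_mem _ (Finset.mem_univ x)) hh).symm
      right_inv := by
        rintro ⟨s, hs⟩
        apply Subtype.ext
        apply Finset.coe_injective
        rw [Finset.coe_image, Finset.coe_univ, Set.image_univ]
        exact Finset.range_orderEmbOfFin s hs }
  rw [Nat.card_congr e, Nat.card_eq_fintype_card, Fintype.card_finset_len,
    Fintype.card_fin]

/-- Cardinality of the fiber of the stable sort over a permutation `p`. -/
lemma fiber_card {n k : ℕ} (hk : 0 < k) (p : Equiv.Perm (Fin (n + 1))) :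
    Nat.card {f : Fin (n + 1) → Fin k // Tuple.sort f = p}
      = (k + ascCount p n).choose (n + 1) := by
  set K := k + ascCount p n with hK
  -- bound for the forward map
  have bound : ∀ (f : Fin (n + 1) → Fin k) (j : Fin (n + 1)),
      (f (p j) : ℕ) + ascCount p (j : ℕ) < K :=
    fun f j => Nat.add_lt_add_of_lt_of_le (f (p j)).isLt
      (ascCount_le p (Nat.lt_succ_iff.1 j.isLt))
  -- strict monotonicity of the forward map
  have sm : ∀ (f : Fin (n + 1) → Fin k), Tuple.sort f = p →
      StrictMono (fun j : Fin (n + 1) =>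
        (⟨(f (p j) : ℕ) + ascCount p (j : ℕ), bound f j⟩ : Fin K)) := by
    intro f hf
    have hadj := (sort_eq_iff_adj p f).1 hf
    rw [Fin.strictMono_iff_lt_succ]
    intro i
    rw [Fin.mk_lt_mk, Fin.coe_castSucc, Fin.val_succ, ascCount_succ]
    by_cases hca : permVal p (i : ℕ) < permVal p ((i : ℕ) + 1)
    · rw [if_pos hca]
      have := (hadj i).1
      rw [Fin.le_def] at this
      omega
    · rw [if_neg hca]
      have hne := permVal_ne p i.isLt
      have hdesc : p i.succ < p i.castSucc := by
        rw [Fin.lt_def, ← permVal_castSucc, ← permVal_succ]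
        omega
      have := (hadj i).2 hdesc
      rw [Fin.lt_def] at this
      omega
  -- inverse direction facts
  have hah : ∀ (h : Fin (n + 1) → Fin K), StrictMono h →
      ∀ j : Fin (n + 1), ascCount p (j : ℕ) ≤ (h j : ℕ) := by
    intro h hh
    intro j
    induction j using Fin.induction with
    | zero => simp [ascCount_zero]
    | succ i ih =>
      have h1 := ascCount_succ_le p (i : ℕ)
      have h2 : (h i.castSucc : ℕ) < (h i.succ : ℕ) := hh (Fin.castSucc_lt_succ (i := i))
      have h3 : (i.succ : ℕ) = (i : ℕ) + 1 := Fin.val_succ i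
      have h4 : ((i.castSucc : Fin (n + 1)) : ℕ) = (i : ℕ) := Fin.coe_castSucc i
      rw [h3]
      rw [h4] at ih
      omega
  have gstep : ∀ (h : Fin (n + 1) → Fin K), StrictMono h → ∀ i : Fin n,
      (h i.castSucc : ℕ) - ascCount p ((i.castSucc : Fin (n + 1)) : ℕ)
        ≤ (h i.succ : ℕ) - ascCount p ((i.succ : Fin (n + 1)) : ℕ) := by
    intro h hh i
    have h1 := ascCount_succ_le p (i : ℕ)
    have h2 : (h i.castSucc : ℕ) < (h i.succ : ℕ) := hh (Fin.castSucc_lt_succ (i := i))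
    have h3 := hah h hh i.castSucc
    rw [Fin.val_succ, Fin.coe_castSucc]
    rw [Fin.coe_castSucc] at h3
    omega
  have gmono : ∀ (h : Fin (n + 1) → Fin K), StrictMono h →
      Monotone (fun j : Fin (n + 1) => (h j : ℕ) - ascCount p (j : ℕ)) :=
    fun h hh => Fin.monotone_iff_le_succ.2 (gstep h hh)
  have gbound : ∀ (h : Fin (n + 1) → Fin K), StrictMono h →
      ∀ j : Fin (n + 1), (h j : ℕ) - ascCount p (j : ℕ) < k := by
    intro h hh j
    have h1 : (h j : ℕ) - ascCount p (j : ℕ)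
        ≤ (h (Fin.last n) : ℕ) - ascCount p ((Fin.last n : Fin (n + 1)) : ℕ) :=
      gmono h hh (Fin.le_last j)
    have h2 : (h (Fin.last n) : ℕ) < K := (h (Fin.last n)).isLt
    have h3 := hah h hh (Fin.last n)
    rw [Fin.val_last] at h1 h3
    have h2' : (h (Fin.last n) : ℕ) < k + ascCount p n := lt_of_lt_of_le h2 (le_of_eq hK)
    omega
  -- the fiber condition for the inverse map
  have hfib : ∀ (h : Fin (n + 1) → Fin K) (hh : StrictMono h),
      Tuple.sort (fun x : Fin (n + 1) =>
        (⟨(h (p.symm x) : ℕ) - ascCount p ((p.symm x : Fin (n + 1)) : ℕ),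
          gbound h hh (p.symm x)⟩ : Fin k)) = p := by
    intro h hh
    rw [sort_eq_iff_adj]
    intro i
    simp only [Equiv.symm_apply_apply]
    constructor
    · rw [Fin.mk_le_mk]
      exact gstep h hh i
    · intro hdesc
      rw [Fin.mk_lt_mk]
      have hne := permVal_ne p i.isLt
      have hd : permVal p ((i : ℕ) + 1) < permVal p (i : ℕ) := by
        rw [permVal_castSucc, permVal_succ]
        exact hdesc
      have hasc : ¬ permVal p (i : ℕ) < permVal p ((i : ℕ) + 1) := by omega
      have ha : ascCount p ((i : ℕ) + 1) = ascCount p (i : ℕ) := by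
        rw [ascCount_succ, if_neg hasc, Nat.add_zero]
      have h2 : (h i.castSucc : ℕ) < (h i.succ : ℕ) := hh (Fin.castSucc_lt_succ (i := i))
      have h3 := hah h hh i.castSucc
      rw [Fin.coe_castSucc] at h3
      rw [Fin.val_succ, Fin.coe_castSucc, ha]
      omega
  -- assemble the equivalence
  have e : {f : Fin (n + 1) → Fin k // Tuple.sort f = p}
      ≃ {h : Fin (n + 1) → Fin K // StrictMono h} :=
    { toFun := fun f => ⟨fun j => ⟨(f.1 (p j) : ℕ) + ascCount p (j : ℕ), bound f.1 j⟩,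
        sm f.1 f.2⟩
      invFun := fun h => ⟨fun x =>
        ⟨(h.1 (p.symm x) : ℕ) - ascCount p ((p.symm x : Fin (n + 1)) : ℕ),
          gbound h.1 h.2 (p.symm x)⟩, hfib h.1 h.2⟩
      left_inv := by
        rintro ⟨f, hf⟩
        apply Subtype.ext
        funext x
        apply Fin.ext
        simp only [Equiv.apply_symm_apply]
        omega
      right_inv := by
        rintro ⟨h, hh⟩
        apply Subtype.ext
        funext j
        apply Fin.ext
        simp only [Equiv.symm_apply_apply]
        exact Nat.sub_add_cancel (hah h hh j) }
  rw [Nat.card_congr e, cardStrictMonoAux]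

/-- Reversing a permutation exchanges descents and ascents. -/
lemma desNum_mul_revPerm {n : ℕ} (p : Equiv.Perm (Fin (n + 1))) :
    desNum (p * Fin.revPerm) = ascCount p n := by
  unfold desNum ascCount
  have hval : ∀ j : ℕ, j < n + 1 →
      permVal (p * Fin.revPerm) j = permVal p (n - j) := by
    intro j hj
    rw [permVal_of_lt _ hj, permVal_of_lt p (by omega : n - j < n + 1)]
    have hrev : Fin.revPerm ⟨j, hj⟩ = (⟨n - j, by omega⟩ : Fin (n + 1)) := by
      apply Fin.ext
      show n + 1 - (j + 1) = n - j
      omega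
    rw [Equiv.Perm.mul_apply, hrev]
  simp only [Nat.add_sub_cancel]
  apply Finset.card_nbij' (fun j => n - 1 - j) (fun i => n - 1 - i)
  · intro a ha
    dsimp only
    rw [Finset.mem_coe, Finset.mem_filter, Finset.mem_range] at ha ⊢
    obtain ⟨ha1, ha2⟩ := ha
    rw [hval a (by omega), hval (a + 1) (by omega)] at ha2
    refine ⟨by omega, ?_⟩
    have e1 : n - (a + 1) = n - 1 - a := by omega
    have e2 : n - a = n - 1 - a + 1 := by omega
    rw [e1, e2] at ha2
    exact ha2
  · intro i hi
    dsimp only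
    rw [Finset.mem_coe, Finset.mem_filter, Finset.mem_range] at hi ⊢
    obtain ⟨hi1, hi2⟩ := hi
    refine ⟨by omega, ?_⟩
    rw [hval (n - 1 - i) (by omega), hval (n - 1 - i + 1) (by omega)]
    have e1 : n - (n - 1 - i) = i + 1 := by omega
    have e2 : n - (n - 1 - i + 1) = i := by omega
    rw [e1, e2]
    exact hi2
  · intro a ha
    dsimp only
    rw [Finset.mem_coe, Finset.mem_filter, Finset.mem_range] at ha
    omega
  · intro i hi
    dsimp only
    rw [Finset.mem_coe, Finset.mem_filter, Finset.mem_range] at hi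
    omega

lemma desNum_le {n : ℕ} (p : Equiv.Perm (Fin (n + 1))) : desNum p ≤ n := by
  unfold desNum
  calc _ ≤ (Finset.range (n + 1 - 1)).card := Finset.card_filter_le _ _
  _ = n := by rw [Finset.card_range]; omega

/-- Worpitzky's identity: `k^m = ∑_{i=0}^{m-1} A(m,i) C(k+i, m)`. -/
theorem worpitzky (k m : ℕ) (hk : 0 < k) (hm : 0 < m) :
    k ^ m = ∑ i ∈ Finset.range m, eulerian m i * (k + i).choose m := by
  obtain ⟨n, rfl⟩ := Nat.exists_eq_succ_of_ne_zero hm.ne'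
  classical
  have step1 : k ^ (n + 1) = Fintype.card (Fin (n + 1) → Fin k) := by
    rw [Fintype.card_fun, Fintype.card_fin, Fintype.card_fin]
  have step2 : Fintype.card (Fin (n + 1) → Fin k)
      = ∑ p : Equiv.Perm (Fin (n + 1)),
          Fintype.card {f : Fin (n + 1) → Fin k // Tuple.sort f = p} := by
    rw [← Fintype.card_sigma]
    exact Fintype.card_congr (Equiv.sigmaFiberEquiv Tuple.sort).symm
  have step3 : ∀ p : Equiv.Perm (Fin (n + 1)),
      Fintype.card {f : Fin (n + 1) → Fin k // Tuple.sort f = p}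
        = (k + desNum (p * Fin.revPerm)).choose (n + 1) := by
    intro p
    rw [← Nat.card_eq_fintype_card, fiber_card hk p, desNum_mul_revPerm]
  have step4 : ∑ p : Equiv.Perm (Fin (n + 1)),
      (k + desNum (p * Fin.revPerm)).choose (n + 1)
        = ∑ q : Equiv.Perm (Fin (n + 1)), (k + desNum q).choose (n + 1) :=
    Equiv.sum_comp (Equiv.mulRight Fin.revPerm)
      (fun q => (k + desNum q).choose (n + 1))
  have step5 : ∑ q : Equiv.Perm (Fin (n + 1)), (k + desNum q).choose (n + 1)
      = ∑ i ∈ Finset.range (n + 1), eulerian (n + 1) i * (k + i).choose (n + 1) := by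
    rw [← Finset.sum_fiberwise_of_maps_to
      (g := desNum) (t := Finset.range (n + 1))
      (fun q _ => Finset.mem_range.2 (Nat.lt_succ_of_le (desNum_le q)))
      (fun q => (k + desNum q).choose (n + 1))]
    apply Finset.sum_congr rfl
    intro i _
    rw [show eulerian (n + 1) i * (k + i).choose (n + 1)
        = ∑ _q ∈ Finset.univ.filter fun q : Equiv.Perm (Fin (n + 1)) => desNum q = i,
            (k + i).choose (n + 1) by
      rw [Finset.sum_const, smul_eq_mul, eulerian]]
    apply Finset.sum_congr rfl
    intro q hq
    rw [(Finset.mem_filter.1 hq).2]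
  rw [step1, step2]
  rw [Finset.sum_congr rfl fun p _ => step3 p]
  rw [step4, step5]

end
end

section
/- For positive integers k and m, k^m equals the number of pairs (p, w) where p is a permutation of {1,...,m+1} with p(m+1) = 1 and w : {1,...,m+1} → ℕ (including 0) is a function such that des(p) + \sum_{i=1}^{m+1} w(i) = k, where des(p) is the number of descents of p. -/
open Finset

noncomputable section

namespace PowAux

variable {m k : ℕ}

/-- number of descents of `q` at positions `< j`. -/
def desBelow {m : ℕ} (q : Equiv.Perm (Fin m)) (j : ℕ) : ℕ :=
  ((Finset.range j).filter fun i => permVal q (i + 1) < permVal q i).card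

lemma desBelow_succ (q : Equiv.Perm (Fin m)) (j : ℕ) :
    desBelow q (j + 1) = desBelow q j + (if permVal q (j + 1) < permVal q j then 1 else 0) := by
  classical
  simp only [desBelow, Finset.range_add_one, Finset.filter_insert]
  split <;> simp [Finset.card_insert_of_notMem]

lemma desBelow_mono (q : Equiv.Perm (Fin m)) : Monotone (desBelow q) := by
  intro a b hab
  exact Finset.card_le_card (Finset.filter_subset_filter _ (Finset.range_subset_range.2 hab))

lemma desNum_eq_desBelow (q : Equiv.Perm (Fin m)) : desNum q = desBelow q (m - 1) := rfl

/-- extension of `w : Fin (m+1) → ℕ` to `ℕ`. -/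
def wext {m : ℕ} (w : Fin (m + 1) → ℕ) (i : ℕ) : ℕ :=
  if h : i < m + 1 then w ⟨i, h⟩ else 0

/-- the permutation of `Fin (m+1)` obtained from `q` by shifting all values up by one and
putting `0` at the last position. -/
def extPerm {m : ℕ} (q : Equiv.Perm (Fin m)) : Equiv.Perm (Fin (m + 1)) :=
  finSuccEquivLast.trans ((q.optionCongr).trans (finSuccEquiv m).symm)

lemma extPerm_castSucc (q : Equiv.Perm (Fin m)) (i : Fin m) :
    extPerm q i.castSucc = (q i).succ := by
  simp [extPerm, finSuccEquivLast_castSucc, finSuccEquiv_symm_some]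

lemma extPerm_last (q : Equiv.Perm (Fin m)) :
    extPerm q (Fin.last m) = 0 := by
  simp [extPerm, finSuccEquivLast_last]

lemma permVal_extPerm_lt (q : Equiv.Perm (Fin m)) {j : ℕ} (hj : j < m) :
    permVal (extPerm q) j = permVal q j + 1 := by
  have h1 : j < m + 1 := Nat.lt_succ_of_lt hj
  rw [permVal, permVal, dif_pos h1, dif_pos hj]
  have h2 : (⟨j, h1⟩ : Fin (m + 1)) = (⟨j, hj⟩ : Fin m).castSucc := rfl
  rw [h2, extPerm_castSucc, Fin.val_succ]

lemma permVal_extPerm_m (q : Equiv.Perm (Fin m)) :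
    permVal (extPerm q) m = 0 := by
  have : (⟨m, Nat.lt_succ_self m⟩ : Fin (m + 1)) = Fin.last m := rfl
  simp [permVal, this, extPerm_last]

lemma desNum_extPerm (hm : 0 < m) (q : Equiv.Perm (Fin m)) :
    desNum (extPerm q) = desNum q + 1 := by
  classical
  obtain ⟨n, rfl⟩ : ∃ n, m = n + 1 := ⟨m - 1, (Nat.succ_pred_eq_of_pos hm).symm⟩
  unfold desNum
  simp only [Nat.add_sub_cancel]
  rw [Finset.range_add_one, Finset.filter_insert]
  have hlast : permVal (extPerm q) (n + 1) < permVal (extPerm q) n := by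
    rw [permVal_extPerm_m, permVal_extPerm_lt q (by omega)]
    omega
  rw [if_pos hlast, Finset.card_insert_of_notMem (by simp)]
  congr 1
  apply congrArg
  apply Finset.filter_congr
  intro j hj
  rw [Finset.mem_range] at hj
  rw [permVal_extPerm_lt q (by omega), permVal_extPerm_lt q (by omega)]
  simp

lemma extPerm_injective : Function.Injective (extPerm (m := m)) := by
  intro q q' h
  ext i
  have := congrArg (fun p : Equiv.Perm (Fin (m+1)) => p i.castSucc) h
  simp only [extPerm_castSucc] at this
  exact congrArg Fin.val (Fin.succ_injective _ this)

lemma exists_extPerm (p : Equiv.Perm (Fin (m + 1))) (hp : p (Fin.last m) = 0) :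
    ∃ q : Equiv.Perm (Fin m), extPerm q = p := by
  have hne : ∀ i : Fin m, p i.castSucc ≠ 0 := by
    intro i h
    have := p.injective (h.trans hp.symm)
    exact absurd this (Fin.castSucc_lt_last i).ne
  have hne' : ∀ i : Fin m, p.symm i.succ ≠ Fin.last m := by
    intro i h
    have h2 : i.succ = p (Fin.last m) := by rw [← h, Equiv.apply_symm_apply]
    rw [hp] at h2
    exact (Fin.succ_ne_zero i) h2
  refine ⟨⟨fun i => (p i.castSucc).pred (hne i), fun i => (p.symm i.succ).castPred (hne' i),
    ?_, ?_⟩, ?_⟩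
  · intro i
    simp [Fin.succ_pred]
  · intro i
    simp [Fin.castSucc_castPred]
  · apply Equiv.ext
    intro j
    induction j using Fin.lastCases with
    | last => rw [extPerm_last, hp]
    | cast i =>
      rw [extPerm_castSucc]
      show ((p i.castSucc).pred (hne i)).succ = p i.castSucc
      exact Fin.succ_pred _ _

end PowAux

namespace PowAux

variable {m k : ℕ}

/-- the sorted value sequence of `f`. -/
def aseq (f : Fin m → Fin k) (j : ℕ) : ℕ :=
  if h : j < m then ((f (Tuple.sort f ⟨j, h⟩)) : ℕ) else 0

/-- partial sums of the weight sequence. -/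
def cseq (f : Fin m → Fin k) (j : ℕ) : ℕ :=
  aseq f j - desBelow (Tuple.sort f) j

/-- the weight function associated to `f`. -/
def wseq (f : Fin m → Fin k) : Fin (m + 1) → ℕ := fun j =>
  if (j : ℕ) < m then
    (if (j : ℕ) = 0 then cseq f 0 else cseq f (j : ℕ) - cseq f ((j : ℕ) - 1))
  else k - 1 - aseq f (m - 1)

lemma aseq_step (f : Fin m → Fin k) {j : ℕ} (hj : j + 1 < m) :
    aseq f j + (if permVal (Tuple.sort f) (j + 1) < permVal (Tuple.sort f) j then 1 else 0)
      ≤ aseq f (j + 1) := by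
  have hj' : j < m := by omega
  have hmono := Tuple.monotone_sort f
  have h1 : f (Tuple.sort f ⟨j, hj'⟩) ≤ f (Tuple.sort f ⟨j + 1, hj⟩) :=
    hmono (show (⟨j, hj'⟩ : Fin m) ≤ ⟨j + 1, hj⟩ by simp [Fin.le_def])
  have h1' : (f (Tuple.sort f ⟨j, hj'⟩) : ℕ) ≤ f (Tuple.sort f ⟨j + 1, hj⟩) := h1
  have h2 := (Tuple.eq_sort_iff.mp (rfl : Tuple.sort f = Tuple.sort f)).2
    ⟨j, hj'⟩ ⟨j + 1, hj⟩ (by simp [Fin.lt_def])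
  unfold aseq
  rw [dif_pos hj, dif_pos hj']
  unfold permVal
  rw [dif_pos hj, dif_pos hj']
  split
  · rename_i hlt
    have hne : f (Tuple.sort f ⟨j, hj'⟩) ≠ f (Tuple.sort f ⟨j + 1, hj⟩) := by
      intro he
      have := h2 he
      rw [Fin.lt_def] at this
      omega
    have : (f (Tuple.sort f ⟨j, hj'⟩) : ℕ) < f (Tuple.sort f ⟨j + 1, hj⟩) :=
      lt_of_le_of_ne h1 fun hv => hne (Fin.ext hv)
    omega
  · omega

lemma desBelow_le_aseq (f : Fin m → Fin k) {j : ℕ} (hj : j < m) :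
    desBelow (Tuple.sort f) j ≤ aseq f j := by
  induction j with
  | zero => simp [desBelow]
  | succ n ih =>
    have hstep := aseq_step f hj
    have hn := ih (by omega)
    rw [desBelow_succ]
    by_cases hP : permVal (Tuple.sort f) (n + 1) < permVal (Tuple.sort f) n
    · rw [if_pos hP] at hstep ⊢; omega
    · rw [if_neg hP] at hstep ⊢; omega

lemma cseq_step (f : Fin m → Fin k) {j : ℕ} (hj : j + 1 < m) :
    cseq f j ≤ cseq f (j + 1) := by
  have hstep := aseq_step f hj
  have h1 := desBelow_le_aseq f (show j < m by omega)
  have h2 := desBelow_le_aseq f hj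
  have h3 := desBelow_succ (Tuple.sort f) j
  unfold cseq
  by_cases hP : permVal (Tuple.sort f) (j + 1) < permVal (Tuple.sort f) j
  · rw [if_pos hP] at hstep h3; omega
  · rw [if_neg hP] at hstep h3; omega

lemma wext_wseq (f : Fin m → Fin k) {i : ℕ} (hi : i < m) :
    wext (wseq f) i =
      if i = 0 then cseq f 0 else cseq f i - cseq f (i - 1) := by
  have hi' : i < m + 1 := by omega
  rw [wext, dif_pos hi']
  show wseq f ⟨i, hi'⟩ = _
  rw [wseq]
  simp [hi]

lemma sum_wseq (f : Fin m → Fin k) {j : ℕ} (hj : j < m) :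
    ∑ i ∈ Finset.range (j + 1), wext (wseq f) i = cseq f j := by
  induction j with
  | zero => simp [wext_wseq f hj]
  | succ n ih =>
    rw [Finset.sum_range_succ, ih (by omega), wext_wseq f hj, if_neg (Nat.succ_ne_zero n)]
    have := cseq_step f hj
    simp only [Nat.add_sub_cancel]
    omega

lemma sum_wext (w : Fin (m + 1) → ℕ) :
    ∑ i ∈ Finset.range (m + 1), wext w i = ∑ i, w i := by
  rw [← Fin.sum_univ_eq_sum_range (wext w) (m + 1)]
  refine Finset.sum_congr rfl fun i _ => ?_
  simp [wext, i.isLt]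

lemma wseq_m (f : Fin m → Fin k) :
    wext (wseq f) m = k - 1 - aseq f (m - 1) := by
  rw [wext, dif_pos (Nat.lt_succ_self m)]
  show wseq f ⟨m, _⟩ = _
  rw [wseq]
  simp

lemma aseq_lt (f : Fin m → Fin k) {j : ℕ} (hj : j < m) : aseq f j < k := by
  rw [aseq, dif_pos hj]
  exact (f _).isLt

lemma fwd_fst (f : Fin m → Fin k) :
    extPerm (Tuple.sort f) ⟨m, Nat.lt_succ_self m⟩ = ⟨0, Nat.succ_pos m⟩ := by
  have h : (⟨m, Nat.lt_succ_self m⟩ : Fin (m + 1)) = Fin.last m := rfl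
  rw [h, extPerm_last]
  ext
  simp

lemma fwd_sum (hm : 0 < m) (f : Fin m → Fin k) :
    desNum (extPerm (Tuple.sort f)) + ∑ i, wseq f i = k := by
  have hm1 : m - 1 + 1 = m := Nat.succ_pred_eq_of_pos hm
  have hsw := sum_wseq f (show m - 1 < m by omega)
  rw [hm1] at hsw
  have h1 : ∑ i, wseq f i =
      (∑ i ∈ Finset.range m, wext (wseq f) i) + wext (wseq f) m := by
    rw [← sum_wext (wseq f), Finset.sum_range_succ]
  rw [desNum_extPerm hm, h1, hsw, wseq_m f]
  have h2 := desBelow_le_aseq f (show m - 1 < m by omega)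
  have h3 := aseq_lt f (show m - 1 < m by omega)
  rw [desNum_eq_desBelow]
  unfold cseq
  omega

lemma chain_lt {q : Equiv.Perm (Fin m)} {i j : Fin m} (hij : i < j)
    (h : ∀ t : ℕ, (i : ℕ) ≤ t → t + 1 ≤ (j : ℕ) → permVal q t < permVal q (t + 1)) :
    q i < q j := by
  have key : ∀ t : ℕ, (i : ℕ) + 1 ≤ t → t ≤ (j : ℕ) → permVal q ↑i < permVal q t := by
    intro t ht
    induction t, ht using Nat.le_induction with
    | base => exact fun htj => h ↑i le_rfl htj
    | succ t ht ih =>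
      intro htj
      exact lt_trans (ih (by omega)) (h t (by omega) htj)
  have hij' : (i : ℕ) < (j : ℕ) := hij
  have hk := key ↑j (by omega) le_rfl
  rw [permVal, permVal, dif_pos i.isLt, dif_pos j.isLt, Fin.eta, Fin.eta] at hk
  exact hk

end PowAux

/-- `k^m` counts the pairs `(p, w)` where `p` is a permutation of `{1, …, m+1}` with
`p(m+1) = 1` and `w : {1, …, m+1} → ℕ` satisfies `des(p) + ∑ w(i) = k`. -/
theorem pow_eq_ncard_pairs (k m : ℕ) (hk : 0 < k) (hm : 0 < m) :
    k ^ m = Set.ncard {pw : Equiv.Perm (Fin (m + 1)) × (Fin (m + 1) → ℕ) |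
      pw.1 ⟨m, Nat.lt_succ_self m⟩ = ⟨0, Nat.succ_pos m⟩ ∧
      desNum pw.1 + ∑ i, pw.2 i = k} := by
  classical
  have hm1 : m - 1 + 1 = m := Nat.succ_pred_eq_of_pos hm
  have hcard : k ^ m = Nat.card (Fin m → Fin k) := by
    simp [Nat.card_eq_fintype_card]
  rw [hcard, ← Nat.card_coe_set_eq]
  have hmem : ∀ f : Fin m → Fin k,
      (PowAux.extPerm (Tuple.sort f), PowAux.wseq f) ∈
        {pw : Equiv.Perm (Fin (m + 1)) × (Fin (m + 1) → ℕ) |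
          pw.1 ⟨m, Nat.lt_succ_self m⟩ = ⟨0, Nat.succ_pos m⟩ ∧
          desNum pw.1 + ∑ i, pw.2 i = k} :=
    fun f => ⟨PowAux.fwd_fst f, PowAux.fwd_sum hm f⟩
  apply Nat.card_eq_of_bijective (fun f => ⟨_, hmem f⟩)
  constructor
  · -- injectivity
    intro f f' h
    rw [Subtype.ext_iff, Prod.ext_iff] at h
    obtain ⟨h1, h2⟩ := h
    have hq : Tuple.sort f = Tuple.sort f' := PowAux.extPerm_injective h1
    have ha : ∀ j : ℕ, j < m → PowAux.aseq f j = PowAux.aseq f' j := by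
      intro j hj
      have e1 := PowAux.sum_wseq f hj
      have e2 := PowAux.sum_wseq f' hj
      rw [show PowAux.wseq f = PowAux.wseq f' from h2] at e1
      have hc : PowAux.cseq f j = PowAux.cseq f' j := e1.symm.trans e2
      have d1 := PowAux.desBelow_le_aseq f hj
      have d2 := PowAux.desBelow_le_aseq f' hj
      rw [hq] at d1
      unfold PowAux.cseq at hc
      rw [hq] at hc
      omega
    funext i
    set j := (Tuple.sort f).symm i with hjdef
    have hji : Tuple.sort f j = i := Equiv.apply_symm_apply _ i
    have hval : PowAux.aseq f ↑j = (f i : ℕ) := by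
      rw [PowAux.aseq, dif_pos j.isLt, Fin.eta, hji]
    have hval' : PowAux.aseq f' ↑j = (f' i : ℕ) := by
      rw [PowAux.aseq, dif_pos j.isLt, ← hq, Fin.eta, hji]
    exact Fin.ext (by rw [← hval, ← hval']; exact ha ↑j j.isLt)
  · -- surjectivity
    rintro ⟨⟨p, w⟩, hp0, hsum⟩
    have hplast : p (Fin.last m) = 0 := hp0
    obtain ⟨q, rfl⟩ := PowAux.exists_extPerm p hplast
    set Aw : ℕ → ℕ :=
      fun j => (∑ i ∈ Finset.range (j + 1), PowAux.wext w i) + PowAux.desBelow q j with hAw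
    have hAw_succ : ∀ j, Aw (j + 1) = Aw j + PowAux.wext w (j + 1) +
        (if permVal q (j + 1) < permVal q j then 1 else 0) := by
      intro j
      simp only [hAw]
      rw [Finset.sum_range_succ, PowAux.desBelow_succ]
      ring
    have hAw_mono : Monotone Aw := monotone_nat_of_le_succ fun j => by rw [hAw_succ]; omega
    have htot : Aw (m - 1) + 1 + PowAux.wext w m = k := by
      have h1 : desNum (PowAux.extPerm q) = desNum q + 1 := PowAux.desNum_extPerm hm q
      have h2 : ∑ i, w i = ∑ i ∈ Finset.range (m + 1), PowAux.wext w i :=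
        (PowAux.sum_wext w).symm
      rw [h1, h2, Finset.sum_range_succ] at hsum
      have h3 : Aw (m - 1) = (∑ i ∈ Finset.range m, PowAux.wext w i) + desNum q := by
        simp only [hAw]
        rw [hm1, PowAux.desNum_eq_desBelow]
      omega
    have hAw_lt : ∀ j : ℕ, j < m → Aw j < k := fun j hj =>
      lt_of_le_of_lt (hAw_mono (show j ≤ m - 1 by omega)) (by omega)
    set f : Fin m → Fin k := fun i => ⟨Aw ((q.symm i : ℕ)), hAw_lt _ (q.symm i).isLt⟩ with hf
    have hfq : ∀ j : Fin m, (f (q j) : ℕ) = Aw ↑j := by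
      intro j
      simp [hf]
    have hsort : q = Tuple.sort f := by
      rw [Tuple.eq_sort_iff]
      constructor
      · intro i j hij
        show f (q i) ≤ f (q j)
        rw [Fin.le_def, hfq, hfq]
        exact hAw_mono (show (i : ℕ) ≤ (j : ℕ) from hij)
      · intro i j hij heq
        have hAeq : Aw ↑i = Aw ↑j := by
          rw [← hfq i, ← hfq j]
          exact congrArg Fin.val heq
        apply PowAux.chain_lt hij
        intro t hti htj
        have hle1 : Aw ↑i ≤ Aw t := hAw_mono hti
        have hle2 : Aw (t + 1) ≤ Aw ↑j := hAw_mono htj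
        have hle3 : Aw t ≤ Aw (t + 1) := hAw_mono (Nat.le_succ t)
        have h1 : Aw t = Aw (t + 1) := by omega
        have h2 := hAw_succ t
        have hnd : ¬ permVal q (t + 1) < permVal q t := by
          intro hd; rw [if_pos hd] at h2; omega
        have ht1 : t + 1 < m := lt_of_le_of_lt htj j.isLt
        have ht0 : t < m := by omega
        rw [permVal, permVal, dif_pos ht1, dif_pos ht0] at hnd ⊢
        have hne : ((q ⟨t, ht0⟩ : Fin m) : ℕ) ≠ ((q ⟨t + 1, ht1⟩ : Fin m) : ℕ) := by
          intro he
          have h4 : (⟨t, ht0⟩ : Fin m) = ⟨t + 1, ht1⟩ := q.injective (Fin.ext he)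
          have := congrArg Fin.val h4
          simp at this
        omega
    have haseq : ∀ j : ℕ, (hj : j < m) → PowAux.aseq f j = Aw j := by
      intro j hj
      rw [PowAux.aseq, dif_pos hj, ← hsort, hfq]
    have hcseq : ∀ j : ℕ, j < m →
        PowAux.cseq f j = ∑ i ∈ Finset.range (j + 1), PowAux.wext w i := by
      intro j hj
      rw [PowAux.cseq, haseq j hj, ← hsort]
      simp only [hAw]
      omega
    have hwseq : PowAux.wseq f = w := by
      funext j'
      have e1 : PowAux.wext (PowAux.wseq f) ↑j' = PowAux.wseq f j' := by
        rw [PowAux.wext, dif_pos j'.isLt, Fin.eta]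
      have e2 : PowAux.wext w ↑j' = w j' := by
        rw [PowAux.wext, dif_pos j'.isLt, Fin.eta]
      rw [← e1, ← e2]
      by_cases hjm : (j' : ℕ) < m
      · rw [PowAux.wext_wseq f hjm]
        by_cases h0 : (j' : ℕ) = 0
        · rw [if_pos h0, h0, hcseq 0 hm]
          simp
        · rw [if_neg h0, hcseq _ hjm, hcseq _ (show (j' : ℕ) - 1 < m by omega)]
          obtain ⟨n, hn⟩ : ∃ n, (j' : ℕ) = n + 1 := ⟨(j' : ℕ) - 1, by omega⟩
          rw [hn]
          simp only [Nat.add_sub_cancel]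
          rw [Finset.sum_range_succ]
          omega
      · have hj'm : (j' : ℕ) = m := by have := j'.isLt; omega
        rw [hj'm]
        have : PowAux.wext (PowAux.wseq f) m = k - 1 - PowAux.aseq f (m - 1) :=
          PowAux.wseq_m f
        rw [this, haseq (m - 1) (by omega)]
        omega
    exact ⟨f, Subtype.ext (Prod.ext_iff.mpr
      ⟨congrArg PowAux.extPerm hsort.symm, hwseq⟩)⟩

end
end

section
/- For positive integers k < n and any positive integer t, the number of integer points (x_1,...,x_n) with 0 ≤ x_i ≤ t and Σ x_i = kt (i.e., lattice points in tΔ_{k,n}) equals (1/(n-1)!) * \sum_{m=0}^{n-1} t^m \sum_{i=0}^{k-1} (-1)^i C(n,i) (k-i)^m P^{n-1-m}_{-i+1, n-1-i}. -/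
open Finset

noncomputable section

/-- `esymm j a b = P^j_{a,b}`: the sum over all `j`-element subsets of the integers
`{a, a+1, …, b}` of the product of their elements. -/
def esymm (j : ℕ) (a b : ℤ) : ℤ :=
  ∑ S ∈ (Finset.Icc a b).powersetCard j, ∏ x ∈ S, x

lemma cardPiAntidiag (n m : ℕ) :
    ((univ : Finset (Fin n)).piAntidiag m).card = (n + m - 1).choose m := by
  classical
  rw [← Fintype.card_coe]
  have e2 : {x : Fin n → ℕ // x ∈ (univ : Finset (Fin n)).piAntidiag m} ≃ Sym (Fin n) m :=
    Equiv.subtypeEquiv (Finsupp.equivFunOnFinite.symm.trans Multiset.toFinsupp.toEquiv.symm)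
      (by
        intro f
        simp only [Finset.mem_piAntidiag, Equiv.trans_apply]
        rw [show ((Multiset.toFinsupp.toEquiv.symm (Finsupp.equivFunOnFinite.symm f)) : Multiset (Fin n))
            = Finsupp.toMultiset (Finsupp.equivFunOnFinite.symm f) from rfl]
        rw [Finsupp.card_toMultiset, Finsupp.sum_fintype _ _ (fun _ => rfl)]
        simp [Finsupp.equivFunOnFinite])
  rw [Fintype.card_congr e2, Sym.card_sym_eq_choose, Fintype.card_fin]

lemma cardShift (n M c : ℕ) (S : Finset (Fin n)) (hc : c * S.card ≤ M) :
    (((univ : Finset (Fin n)).piAntidiag M).filter (fun x => ∀ i ∈ S, c ≤ x i)).card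
      = ((univ : Finset (Fin n)).piAntidiag (M - c * S.card)).card := by
  classical
  have hsum : ∀ (_ : Fin n → ℕ), ∑ i, (if i ∈ S then c else 0) = c * S.card := by
    intro g
    rw [Finset.sum_ite_mem, univ_inter, Finset.sum_const, smul_eq_mul, mul_comm]
  refine (Finset.card_nbij' (fun x => fun i => x i - if i ∈ S then c else 0)
    (fun y => fun i => y i + if i ∈ S then c else 0) ?_ ?_ ?_ ?_).symm.symm
  · intro x hx
    simp only [Finset.mem_coe, mem_filter, Finset.mem_piAntidiag] at hx ⊢
    obtain ⟨⟨hs, -⟩, hb⟩ := hx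
    refine ⟨?_, fun i _ => Finset.mem_univ i⟩
    rw [Finset.sum_tsub_distrib]
    · rw [hsum 0, hs]
    · intro i _
      by_cases h : i ∈ S <;> simp [h]
      exact hb i h
  · intro y hy
    simp only [Finset.mem_coe, mem_filter, Finset.mem_piAntidiag] at hy ⊢
    obtain ⟨hs, -⟩ := hy
    refine ⟨⟨?_, fun i _ => Finset.mem_univ i⟩, ?_⟩
    · rw [Finset.sum_add_distrib, hs, hsum 0]
      omega
    · intro i hi
      simp [hi]
  · intro x hx
    simp only [Finset.mem_coe, mem_filter, Finset.mem_piAntidiag] at hx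
    obtain ⟨-, hb⟩ := hx
    funext i
    by_cases h : i ∈ S <;> simp [h]
    exact Nat.sub_add_cancel (hb i h)
  · intro y hy
    funext i
    by_cases h : i ∈ S <;> simp [h]

lemma cardShiftFull (n M c : ℕ) (hc : 0 < c) (S : Finset (Fin n)) :
    ((((univ : Finset (Fin n)).piAntidiag M).filter (fun x => ∀ i ∈ S, c ≤ x i)).card
      = if c * S.card ≤ M then (n + (M - c * S.card) - 1).choose (M - c * S.card) else 0) := by
  split_ifs with h
  · rw [cardShift n M c S h, cardPiAntidiag]
  · rw [Finset.card_eq_zero]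
    rw [Finset.filter_eq_empty_iff]
    intro x hx hb
    simp only [Finset.mem_piAntidiag] at hx
    obtain ⟨hs, -⟩ := hx
    have h1 : S.card • c ≤ ∑ i ∈ S, x i := Finset.card_nsmul_le_sum S x c hb
    have h2 : ∑ i ∈ S, x i ≤ ∑ i, x i :=
      Finset.sum_le_sum_of_subset (Finset.subset_univ S)
    rw [smul_eq_mul, mul_comm] at h1
    have h3 : Finset.univ.sum x = ∑ i : Fin n, x i := rfl
    omega

lemma inclExcl (n s t : ℕ) :
    ((((univ : Finset (Fin n)).piAntidiag s).filter (fun x => ∀ i, x i ≤ t)).card : ℚ)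
      = ∑ S ∈ (univ : Finset (Fin n)).powerset, (-1 : ℚ) ^ S.card *
          ((((univ : Finset (Fin n)).piAntidiag s).filter (fun x => ∀ i ∈ S, t + 1 ≤ x i)).card : ℚ) := by
  classical
  set U := (univ : Finset (Fin n)).piAntidiag s with hU
  have key : ∀ B : Finset (Fin n), (∑ S ∈ B.powerset, (-1:ℚ)^S.card) = if B = ∅ then 1 else 0 := by
    intro B
    have h := @Finset.sum_powerset_neg_one_pow_card (Fin n) _ B
    calc (∑ S ∈ B.powerset, (-1:ℚ)^S.card)
        = ((∑ S ∈ B.powerset, (-1:ℤ)^S.card : ℤ) : ℚ) := by push_cast; rfl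
      _ = _ := by rw [h]; split <;> simp
  have hcard : ∀ S : Finset (Fin n),
      ((U.filter (fun x => ∀ i ∈ S, t + 1 ≤ x i)).card : ℚ)
        = ∑ x ∈ U, if (∀ i ∈ S, t + 1 ≤ x i) then (1 : ℚ) else 0 := by
    intro S; rw [Finset.sum_boole]
  calc ((U.filter (fun x => ∀ i, x i ≤ t)).card : ℚ)
      = ∑ x ∈ U, if ((univ : Finset (Fin n)).filter fun i => t + 1 ≤ x i) = ∅ then (1:ℚ) else 0 := by
        rw [Finset.sum_boole]
        congr 1
        apply congrArg
        apply Finset.filter_congr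
        intro x _
        simp only [eq_iff_iff, Finset.filter_eq_empty_iff, Finset.mem_univ, true_implies]
        constructor
        · intro h i; have := h i; omega
        · intro h i; have := @h i; omega
    _ = ∑ x ∈ U, ∑ S ∈ ((univ : Finset (Fin n)).filter fun i => t + 1 ≤ x i).powerset,
          (-1 : ℚ) ^ S.card := by
        refine Finset.sum_congr rfl fun x _ => ?_
        rw [key]
    _ = ∑ x ∈ U, ∑ S ∈ (univ : Finset (Fin n)).powerset,
          if S ⊆ (univ : Finset (Fin n)).filter (fun i => t + 1 ≤ x i) then (-1 : ℚ) ^ S.card else 0 := by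
        refine Finset.sum_congr rfl fun x _ => ?_
        rw [← Finset.sum_filter]
        congr 1
        ext T
        simp [Finset.mem_powerset]
    _ = ∑ S ∈ (univ : Finset (Fin n)).powerset, (-1 : ℚ) ^ S.card *
          ((U.filter (fun x => ∀ i ∈ S, t + 1 ≤ x i)).card : ℚ) := by
        rw [Finset.sum_comm]
        refine Finset.sum_congr rfl fun S _ => ?_
        rw [hcard S, Finset.mul_sum]
        refine Finset.sum_congr rfl fun x _ => ?_
        have hiff : (S ⊆ (univ : Finset (Fin n)).filter (fun i => t + 1 ≤ x i)) ↔ (∀ i ∈ S, t + 1 ≤ x i) := by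
          constructor
          · intro h i hi; exact (Finset.mem_filter.mp (h hi)).2
          · intro h i hi; exact Finset.mem_filter.mpr ⟨Finset.mem_univ i, h i hi⟩
        split <;> split <;> simp_all

lemma prodIccEq (f : ℤ → ℚ) (a : ℤ) (r : ℕ) :
    ∏ x ∈ Finset.Icc a (a + r - 1), f x = ∏ j ∈ Finset.range r, f (a + j) := by
  rw [show Finset.Icc a (a + r - 1) = (Finset.range r).image (fun j : ℕ => a + (j : ℤ)) from ?_]
  · rw [Finset.prod_image]
    intro x _ y _ h
    have h' : a + (x:ℤ) = a + y := h
    omega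
  · ext x
    simp only [Finset.mem_Icc, Finset.mem_image, Finset.mem_range]
    constructor
    · intro h
      exact ⟨(x - a).toNat, by omega, by omega⟩
    · rintro ⟨j, hj, rfl⟩
      omega

lemma vieta (c : ℚ) (a : ℤ) (r : ℕ) :
    ∏ x ∈ Finset.Icc a (a + r - 1), ((x : ℚ) + c)
      = ∑ j ∈ Finset.range (r + 1), ((esymm j a (a + r - 1) : ℤ) : ℚ) * c ^ (r - j) := by
  have hcard : (Finset.Icc a (a + r - 1)).card = r := by
    rw [Int.card_Icc]; omega
  rw [Finset.prod_add, Finset.powerset_card_biUnion, Finset.sum_biUnion (fun i _ j _ hij => Finset.pairwise_disjoint_powersetCard _ hij), hcard]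
  refine Finset.sum_congr rfl fun j hj => ?_
  rw [esymm]
  push_cast
  rw [Finset.sum_mul]
  refine Finset.sum_congr rfl fun S hS => ?_
  obtain ⟨hsub, hcardS⟩ := Finset.mem_powersetCard.mp hS
  rw [Finset.prod_const, Finset.card_sdiff_of_subset hsub, hcard, hcardS]

lemma ascProd (M r : ℕ) : (M+1).ascFactorial r = ∏ j ∈ Finset.range r, (M + 1 + j) := by
  induction r with
  | zero => simp
  | succ r ih => rw [Nat.ascFactorial_succ, Finset.prod_range_succ, ih]; ring

lemma keyterm (n k t i : ℕ) (hi : i < k) (hkn : k < n) (ht : 0 < t) :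
    (((n-1).factorial : ℚ)) * (if (t+1)*i ≤ k*t then (((n + (k*t - (t+1)*i) - 1).choose (k*t - (t+1)*i) : ℕ) : ℚ) else 0)
      = ∏ x ∈ Finset.Icc (1 - (i:ℤ)) ((n:ℤ) - 1 - i), ((x : ℚ) + ((k - i : ℕ) : ℚ) * t) := by
  have hn1 : 1 ≤ n := by omega
  have hb : (n:ℤ) - 1 - i = (1 - (i:ℤ)) + ((n-1 : ℕ) : ℤ) - 1 := by push_cast; omega
  rw [hb]
  by_cases h : (t+1)*i ≤ k*t
  · rw [if_pos h, prodIccEq (fun x => (x:ℚ) + ((k - i : ℕ) : ℚ) * t)]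
    set M := k*t - (t+1)*i with hM
    have hchoose : (n-1).factorial * (n + M - 1).choose M = (M+1).ascFactorial (n-1) := by
      rw [Nat.ascFactorial_eq_factorial_mul_choose]
      congr 1
      have h1 : n + M - 1 = M + (n-1) := by omega
      rw [h1]
      have h2 := Nat.choose_symm (n := M + (n-1)) (k := n-1) (by omega)
      rw [show M + (n-1) - (n-1) = M by omega] at h2
      exact h2
    have e4 : ((n-1).factorial : ℚ) * (((n + M - 1).choose M : ℕ) : ℚ)
        = (((M+1).ascFactorial (n-1) : ℕ) : ℚ) := by
      rw [← hchoose]; push_cast; ring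
    rw [e4, ascProd]
    push_cast [Nat.cast_sub hi.le, Nat.cast_sub h]
    refine Finset.prod_congr rfl fun j _ => ?_
    rw [hM]
    push_cast [Nat.cast_sub h]
    ring
  · rw [if_neg h, mul_zero]
    symm
    apply Finset.prod_eq_zero (i := -(((k - i : ℕ) : ℤ) * t))
    · rw [Finset.mem_Icc]
      have h2 := Nat.lt_of_not_le h
      rw [add_mul, one_mul, mul_comm t i] at h2
      have e2 : (((k - i : ℕ) : ℤ)) * t = ((k*t : ℕ) : ℤ) - ((i*t : ℕ) : ℤ) := by
        push_cast [Nat.cast_sub hi.le]; ring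
      rw [e2]
      have e5 : i * t ≤ k * t := Nat.mul_le_mul_right t hi.le
      constructor <;> omega
    · push_cast [Nat.cast_sub hi.le]
      ring

/-- The number of lattice points in the `t`-th dilate of the hypersimplex `Δ_{k,n}`
equals `(1/(n-1)!) ∑_{m=0}^{n-1} t^m ∑_{i=0}^{k-1} (-1)^i C(n,i) (k-i)^m
P^{n-1-m}_{-i+1, n-1-i}`. -/
theorem hypersimplex_count_expanded (k n t : ℕ) (hk : 0 < k) (hkn : k < n) (ht : 0 < t) :
    (Set.ncard {x : Fin n → ℕ | (∀ i, x i ≤ t) ∧ ∑ i, x i = k * t} : ℚ)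
      = (1 / (Nat.factorial (n - 1) : ℚ)) *
          ∑ m ∈ Finset.range n, (t : ℚ) ^ m *
            ∑ i ∈ Finset.range k,
              (-1 : ℚ) ^ i * n.choose i * ((k - i : ℕ) : ℚ) ^ m *
                ((esymm (n - 1 - m) (1 - (i : ℤ)) ((n : ℤ) - 1 - i) : ℤ) : ℚ) := by
  classical
  have hfac : ((n-1).factorial : ℚ) ≠ 0 := by positivity
  -- Step 1: the set as a finset
  have hset : {x : Fin n → ℕ | (∀ i, x i ≤ t) ∧ ∑ i, x i = k * t}
      = ↑(((univ : Finset (Fin n)).piAntidiag (k*t)).filter (fun x => ∀ i, x i ≤ t)) := by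
    ext x
    simp only [Set.mem_setOf_eq, Finset.coe_filter, Finset.mem_piAntidiag, Finset.mem_univ]
    constructor
    · rintro ⟨h1, h2⟩; exact ⟨⟨h2, fun _ _ => trivial⟩, h1⟩
    · rintro ⟨⟨h2, -⟩, h1⟩; exact ⟨h1, h2⟩
  rw [hset, Set.ncard_coe_finset]
  -- Step 2: inclusion-exclusion and grouping by cardinality
  rw [inclExcl n (k*t) t]
  have hterm : ∀ S : Finset (Fin n),
      (((((univ : Finset (Fin n)).piAntidiag (k*t)).filter (fun x => ∀ i ∈ S, t + 1 ≤ x i)).card : ℚ))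
        = (if (t+1) * S.card ≤ k*t then (((n + (k*t - (t+1) * S.card) - 1).choose (k*t - (t+1) * S.card) : ℕ) : ℚ) else 0) := by
    intro S
    rw [cardShiftFull n (k*t) (t+1) (by omega) S]
    split_ifs <;> simp
  have step2 : (∑ S ∈ (univ : Finset (Fin n)).powerset, (-1 : ℚ) ^ S.card *
        ((((univ : Finset (Fin n)).piAntidiag (k*t)).filter (fun x => ∀ i ∈ S, t + 1 ≤ x i)).card : ℚ))
      = ∑ j ∈ Finset.range (n+1), (n.choose j : ℚ) * ((-1:ℚ)^j *
          (if (t+1) * j ≤ k*t then (((n + (k*t - (t+1) * j) - 1).choose (k*t - (t+1) * j) : ℕ) : ℚ) else 0)) := by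
    rw [Finset.powerset_card_biUnion, Finset.sum_biUnion (fun i _ j _ hij => Finset.pairwise_disjoint_powersetCard _ hij)]
    rw [Finset.card_univ, Fintype.card_fin]
    refine Finset.sum_congr rfl fun j hj => ?_
    rw [Finset.sum_congr rfl (fun S hS => ?_), Finset.sum_const,
      Finset.card_powersetCard, Finset.card_univ, Fintype.card_fin, nsmul_eq_mul]
    have hc : S.card = j := (Finset.mem_powersetCard.mp hS).2
    rw [hterm S, hc]
  rw [step2]
  -- Step 3: restrict to range k
  have step3 : (∑ j ∈ Finset.range (n+1), (n.choose j : ℚ) * ((-1:ℚ)^j *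
        (if (t+1) * j ≤ k*t then (((n + (k*t - (t+1) * j) - 1).choose (k*t - (t+1) * j) : ℕ) : ℚ) else 0)))
      = ∑ j ∈ Finset.range k, (n.choose j : ℚ) * ((-1:ℚ)^j *
          (if (t+1) * j ≤ k*t then (((n + (k*t - (t+1) * j) - 1).choose (k*t - (t+1) * j) : ℕ) : ℚ) else 0)) := by
    symm
    apply Finset.sum_subset
    · intro j hj
      simp only [Finset.mem_range] at hj ⊢
      omega
    · intro j _ hj
      simp only [Finset.mem_range, not_lt] at hj
      have : ¬ ((t+1) * j ≤ k*t) := by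
        intro hcon
        have h1 : (t+1) * k ≤ (t+1) * j := Nat.mul_le_mul_left (t+1) hj
        have : (t+1) * k = k * t + k := by ring
        omega
      rw [if_neg this]
      ring
  rw [step3]
  -- Step 4: rewrite RHS via sum_comm and vieta
  have hn : n - 1 + 1 = n := by omega
  set F : ℕ → ℚ := fun j =>
    if (t+1) * j ≤ k*t then (((n + (k*t - (t+1) * j) - 1).choose (k*t - (t+1) * j) : ℕ) : ℚ) else 0
    with hF
  have main : ∑ m ∈ Finset.range n, (t : ℚ) ^ m *
        ∑ i ∈ Finset.range k,
          (-1 : ℚ) ^ i * n.choose i * ((k - i : ℕ) : ℚ) ^ m *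
            ((esymm (n - 1 - m) (1 - (i : ℤ)) ((n : ℤ) - 1 - i) : ℤ) : ℚ)
      = ((n-1).factorial : ℚ) * ∑ j ∈ Finset.range k, (n.choose j : ℚ) * ((-1:ℚ)^j * F j) := by
    rw [Finset.mul_sum]
    calc ∑ m ∈ Finset.range n, (t : ℚ) ^ m *
          ∑ i ∈ Finset.range k,
            (-1 : ℚ) ^ i * n.choose i * ((k - i : ℕ) : ℚ) ^ m *
              ((esymm (n - 1 - m) (1 - (i : ℤ)) ((n : ℤ) - 1 - i) : ℤ) : ℚ)
        = ∑ i ∈ Finset.range k, ∑ m ∈ Finset.range n,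
            (t : ℚ) ^ m * ((-1 : ℚ) ^ i * n.choose i * ((k - i : ℕ) : ℚ) ^ m *
              ((esymm (n - 1 - m) (1 - (i : ℤ)) ((n : ℤ) - 1 - i) : ℤ) : ℚ)) := by
          rw [Finset.sum_comm]
          exact Finset.sum_congr rfl fun m _ => Finset.mul_sum _ _ _
      _ = ∑ i ∈ Finset.range k, ((n-1).factorial : ℚ) * ((n.choose i : ℚ) * ((-1:ℚ)^i * F i)) := by
          refine Finset.sum_congr rfl fun i hi => ?_
          have hik : i < k := Finset.mem_range.mp hi
          have hvieta := vieta (((k - i : ℕ) : ℚ) * t) (1 - (i:ℤ)) (n-1)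
          have hb : (1 - (i:ℤ)) + ((n-1 : ℕ) : ℤ) - 1 = (n:ℤ) - 1 - i := by push_cast; omega
          rw [hn, hb] at hvieta
          have hrefl := Finset.sum_range_reflect
            (fun m => (((k - i : ℕ) : ℚ) * t) ^ m *
              ((esymm (n - 1 - m) (1 - (i : ℤ)) ((n : ℤ) - 1 - i) : ℤ) : ℚ)) n
          calc ∑ m ∈ Finset.range n,
                (t : ℚ) ^ m * ((-1 : ℚ) ^ i * n.choose i * ((k - i : ℕ) : ℚ) ^ m *
                  ((esymm (n - 1 - m) (1 - (i : ℤ)) ((n : ℤ) - 1 - i) : ℤ) : ℚ))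
              = (-1 : ℚ) ^ i * n.choose i * ∑ m ∈ Finset.range n,
                  ((((k - i : ℕ) : ℚ) * t) ^ m *
                    ((esymm (n - 1 - m) (1 - (i : ℤ)) ((n : ℤ) - 1 - i) : ℤ) : ℚ)) := by
                rw [Finset.mul_sum]
                refine Finset.sum_congr rfl fun m _ => ?_
                rw [mul_pow]
                ring
            _ = (-1 : ℚ) ^ i * n.choose i * ∑ j ∈ Finset.range n,
                  ((esymm j (1 - (i : ℤ)) ((n : ℤ) - 1 - i) : ℤ) : ℚ) *
                    ((((k - i : ℕ) : ℚ) * t)) ^ (n - 1 - j) := by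
                congr 1
                rw [← hrefl]
                refine Finset.sum_congr rfl fun j hj => ?_
                have hj' : j < n := Finset.mem_range.mp hj
                rw [show n - 1 - (n - 1 - j) = j by omega]
                ring
            _ = (-1 : ℚ) ^ i * n.choose i *
                  ∏ x ∈ Finset.Icc (1 - (i:ℤ)) ((n:ℤ) - 1 - i),
                    ((x : ℚ) + ((k - i : ℕ) : ℚ) * t) := by rw [hvieta]
            _ = (-1 : ℚ) ^ i * n.choose i *
                  (((n-1).factorial : ℚ) * F i) := by
                rw [← keyterm n k t i hik hkn ht]
            _ = ((n-1).factorial : ℚ) * ((n.choose i : ℚ) * ((-1:ℚ)^i * F i)) := by ring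
  rw [main, one_div, inv_mul_cancel_left₀ hfac]

end
end

section
/- Fix positive integers n, m+1 ≤ n and k. The product k^m * [n, m+1] (where [n, m+1] is the unsigned Stirling number of the first kind) equals the number of cycle-ordered, weighted permutations of {1,...,n} of type (n, m+1, k). -/
open Finset

noncomputable section

/-- `x` is the minimum of its cycle under `σ`. -/
def IsCycleMin {n : ℕ} (σ : Equiv.Perm (Fin n)) (x : Fin n) : Prop :=
  ∀ y, σ.SameCycle x y → x ≤ y

open scoped Classical in
/-- The number of cycles of `σ` (including fixed points). -/
def numCycles {n : ℕ} (σ : Equiv.Perm (Fin n)) : ℕ :=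
  (Finset.univ.filter fun x => IsCycleMin σ x).card

open scoped Classical in
/-- The unsigned Stirling number of the first kind `[n, m]`. -/
def stirlingFirst (n m : ℕ) : ℕ :=
  (Finset.univ.filter fun σ : Equiv.Perm (Fin n) => numCycles σ = m).card

namespace CWP
open scoped Classical
variable {m k : ℕ}
def gv (g : Fin (m+1) → ℕ) (i : ℕ) : ℕ := if h : i < m + 1 then g ⟨i, h⟩ else 0
def Dlt (p : Equiv.Perm (Fin (m+1))) (j : ℕ) : Finset ℕ :=
  (Finset.range j).filter fun i => permVal p (i+1) < permVal p i
def Lf (p : Equiv.Perm (Fin (m+1))) (g : Fin (m+1) → ℕ) (j : ℕ) : ℕ :=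
  (∑ i ∈ Finset.range (j+1), gv g i) + (Dlt p j).card
def Ef (p : Equiv.Perm (Fin (m+1))) (g : Fin (m+1) → ℕ) (j : ℕ) : ℕ :=
  Lf p g j * (m+1) + permVal p j
lemma desNum_eq (p : Equiv.Perm (Fin (m+1))) : desNum p = (Dlt p m).card := rfl
lemma sum_g (g : Fin (m+1) → ℕ) : (∑ i, g i) = ∑ i ∈ Finset.range (m+1), gv g i := by
  rw [← Fin.sum_univ_eq_sum_range]
  exact Finset.sum_congr rfl fun i _ => by have := i.isLt; simp [gv]; intro h; omega
lemma Lstep (p : Equiv.Perm (Fin (m+1))) (g : Fin (m+1) → ℕ) (j : ℕ) :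
    Lf p g (j+1) = Lf p g j + gv g (j+1)
      + (if permVal p (j+1) < permVal p j then 1 else 0) := by
  unfold Lf Dlt
  rw [Finset.sum_range_succ, Finset.range_add_one, Finset.filter_insert]
  split_ifs with h
  · rw [Finset.card_insert_of_notMem (by simp [Dlt])]; ring
  · ring
lemma Lmono (p : Equiv.Perm (Fin (m+1))) (g : Fin (m+1) → ℕ) {a b : ℕ} (h : a ≤ b) :
    Lf p g a ≤ Lf p g b := by
  induction b with
  | zero => simp [Nat.le_zero.mp h]
  | succ c ih =>
    rcases Nat.lt_or_ge a (c+1) with h' | h'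
    · exact le_trans (ih (Nat.lt_succ_iff.mp h')) (by rw [Lstep]; omega)
    · have : a = c + 1 := le_antisymm h h'
      simp [this]

lemma permVal_lt (p : Equiv.Perm (Fin (m+1))) {j : ℕ} (h : j < m + 1) :
    permVal p j < m + 1 := by
  simp only [permVal, dif_pos h]
  exact (p ⟨j, h⟩).isLt

lemma permVal_ne (p : Equiv.Perm (Fin (m+1))) {a b : ℕ} (ha : a < m + 1) (hb : b < m + 1)
    (hab : a ≠ b) : permVal p a ≠ permVal p b := by
  simp only [permVal, dif_pos ha, dif_pos hb]
  intro h
  exact hab (congrArg Fin.val (p.injective (Fin.val_injective h)))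

lemma Estep (p : Equiv.Perm (Fin (m+1))) (g : Fin (m+1) → ℕ) {j : ℕ} (h : j + 1 < m) :
    Ef p g j < Ef p g (j+1) := by
  have hL := Lstep p g j
  have h1 : permVal p j < m + 1 := permVal_lt p (by omega)
  have h2 : permVal p (j+1) < m + 1 := permVal_lt p (by omega)
  have hne : permVal p (j+1) ≠ permVal p j := permVal_ne p (by omega) (by omega) (by omega)
  unfold Ef
  rcases lt_or_gt_of_ne hne with hd | hd
  · rw [if_pos hd] at hL
    have : (Lf p g j + 1) * (m+1) ≤ Lf p g (j+1) * (m+1) :=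
      Nat.mul_le_mul_right _ (by omega)
    nlinarith
  · rw [if_neg (by omega)] at hL
    have : Lf p g j * (m+1) ≤ Lf p g (j+1) * (m+1) := Nat.mul_le_mul_right _ (by omega)
    omega

lemma Emono (p : Equiv.Perm (Fin (m+1))) (g : Fin (m+1) → ℕ) {a b : ℕ} (hab : a < b)
    (hb : b < m) : Ef p g a < Ef p g b := by
  induction b with
  | zero => omega
  | succ c ih =>
    rcases Nat.lt_or_ge a c with h' | h'
    · exact lt_trans (ih h' (by omega)) (Estep p g hb)
    · have : a = c := by omega
      subst this
      exact Estep p g hb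

lemma permVal_last {p : Equiv.Perm (Fin (m+1))} (hp : p (Fin.last m) = 0) :
    permVal p m = 0 := by
  simp only [permVal, dif_pos (Nat.lt_succ_self m)]
  have : (⟨m, Nat.lt_succ_self m⟩ : Fin (m+1)) = Fin.last m := rfl
  rw [this, hp]
  rfl

lemma permVal_pos {p : Equiv.Perm (Fin (m+1))} (hp : p (Fin.last m) = 0) {j : ℕ}
    (hj : j < m) : 0 < permVal p j := by
  have h1 : permVal p j ≠ permVal p m := permVal_ne p (by omega) (by omega) (by omega)
  rw [permVal_last hp] at h1
  omega

lemma card_Dlt_full {p : Equiv.Perm (Fin (m+1))} (hp : p (Fin.last m) = 0) (hm : 0 < m) :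
    (Dlt p m).card = (Dlt p (m-1)).card + 1 := by
  obtain ⟨t, rfl⟩ : ∃ t, m = t + 1 := ⟨m - 1, by omega⟩
  unfold Dlt
  rw [Finset.range_add_one, Finset.filter_insert,
    if_pos (by rw [permVal_last hp]; exact permVal_pos hp (by omega)),
    Finset.card_insert_of_notMem (by simp)]
  simp

lemma Lbound {p : Equiv.Perm (Fin (m+1))} {g : Fin (m+1) → ℕ}
    (hp : p (Fin.last m) = 0) (hsum : (∑ i, g i) + desNum p = k) {j : ℕ} (hj : j < m) :
    Lf p g j < k := by
  have hm : 0 < m := by omega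
  have h1 : Lf p g j ≤ Lf p g (m-1) := Lmono p g (by omega)
  have e1 : (∑ i, g i) = (∑ i ∈ Finset.range m, gv g i) + gv g m := by
    rw [sum_g, Finset.sum_range_succ]
  have e2 : desNum p = (Dlt p (m-1)).card + 1 := by
    rw [desNum_eq, card_Dlt_full hp hm]
  have e3 : Lf p g (m-1) = (∑ i ∈ Finset.range m, gv g i) + (Dlt p (m-1)).card := by
    simp only [Lf, show m - 1 + 1 = m from by omega]
  omega

/-- The set of pairs (p, g). -/
def PairsT (m k : ℕ) : Type :=
  {pg : Equiv.Perm (Fin (m+1)) × (Fin (m+1) → ℕ) //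
    pg.1 (Fin.last m) = 0 ∧ (∑ i, pg.2 i) + desNum pg.1 = k}

def enc (f : Fin m → Fin k) (v : Fin m) : ℕ := (f v : ℕ) * (m+1) + (v : ℕ) + 1

lemma enc_injective (f : Fin m → Fin k) : Function.Injective (enc f) := by
  intro a b h
  unfold enc at h
  have ha : (a : ℕ) + 1 < m + 1 := by omega
  have hb : (b : ℕ) + 1 < m + 1 := by omega
  have h2 : ((a : ℕ) + 1) % (m+1) = ((b : ℕ) + 1) % (m+1) := by
    rw [← Nat.add_mul_mod_self_right ((a : ℕ) + 1) ((f a : ℕ)) (m+1),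
      ← Nat.add_mul_mod_self_right ((b : ℕ) + 1) ((f b : ℕ)) (m+1)]
    congr 1
    omega
  rw [Nat.mod_eq_of_lt ha, Nat.mod_eq_of_lt hb] at h2
  exact Fin.ext (by omega)

lemma pos_lt {p : Equiv.Perm (Fin (m+1))} (hp : p (Fin.last m) = 0) (v : Fin m) :
    ((p.symm v.succ : Fin (m+1)) : ℕ) < m := by
  by_contra h
  have h1 : p.symm v.succ = Fin.last m := Fin.ext (by
    have := (p.symm v.succ).isLt
    simp only [Fin.val_last]
    omega)
  have h2 : v.succ = (0 : Fin (m+1)) := by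
    rw [← hp, ← h1, Equiv.apply_symm_apply]
  exact (Fin.succ_ne_zero v) h2

/-- The forward map on data: the level of value v+1. -/
def phiF (p : Equiv.Perm (Fin (m+1))) (g : Fin (m+1) → ℕ) (v : Fin m) : ℕ :=
  Lf p g ((p.symm v.succ : Fin (m+1)) : ℕ)

def phi (pg : PairsT m k) (v : Fin m) : Fin k :=
  ⟨phiF pg.1.1 pg.1.2 v, Lbound pg.2.1 pg.2.2 (pos_lt pg.2.1 v)⟩

lemma permVal_pos_eq (p : Equiv.Perm (Fin (m+1))) (v : Fin m) :
    permVal p ((p.symm v.succ : Fin (m+1)) : ℕ) = (v : ℕ) + 1 := by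
  simp only [permVal, dif_pos (p.symm v.succ).isLt]
  rw [show (⟨((p.symm v.succ : Fin (m+1)) : ℕ), (p.symm v.succ).isLt⟩ : Fin (m+1))
      = p.symm v.succ from Fin.ext rfl, Equiv.apply_symm_apply]
  rfl

/-- Key: E at the position of value v+1 equals the encoding of phi. -/
lemma Ef_eq_enc (pg : PairsT m k) (v : Fin m) :
    Ef pg.1.1 pg.1.2 ((pg.1.1.symm v.succ : Fin (m+1)) : ℕ) = enc (phi pg) v := by
  unfold Ef enc phi phiF
  rw [permVal_pos_eq]
  rfl

lemma permVal_lt' (p : Equiv.Perm (Fin (m+1))) (j : ℕ) : permVal p j < m + 1 := by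
  unfold permVal
  split
  · exact (p ⟨j, by assumption⟩).isLt
  · omega

lemma Ef_mod (p : Equiv.Perm (Fin (m+1))) (g : Fin (m+1) → ℕ) (j : ℕ) :
    Ef p g j % (m+1) = permVal p j := by
  unfold Ef
  rw [Nat.mul_comm, Nat.mul_add_mod, Nat.mod_eq_of_lt (permVal_lt' p j)]

lemma Ef_div (p : Equiv.Perm (Fin (m+1))) (g : Fin (m+1) → ℕ) (j : ℕ) :
    Ef p g j / (m+1) = Lf p g j := by
  unfold Ef
  rw [Nat.mul_comm, Nat.mul_add_div (Nat.succ_pos m),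
    Nat.div_eq_of_lt (permVal_lt' p j), Nat.add_zero]

lemma Ef_mem (pg : PairsT m k) (j : Fin m) :
    Ef pg.1.1 pg.1.2 (j : ℕ) ∈ Finset.image (enc (phi pg)) Finset.univ := by
  set p := pg.1.1 with hpdef
  have h0 : p (Fin.castSucc j) ≠ 0 := by
    intro h
    have h1 : Fin.castSucc j = Fin.last m := p.injective (h.trans pg.2.1.symm)
    exact absurd h1 (Fin.ne_of_lt (Fin.castSucc_lt_last j))
  set v := (p (Fin.castSucc j)).pred h0 with hvdef
  have hv : v.succ = p (Fin.castSucc j) := Fin.succ_pred _ h0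
  have hsymm : p.symm v.succ = Fin.castSucc j := by rw [hv, Equiv.symm_apply_apply]
  refine Finset.mem_image.mpr ⟨v, Finset.mem_univ v, ?_⟩
  rw [← Ef_eq_enc pg v, hsymm]
  rfl

lemma EFin_strictMono (pg : PairsT m k) :
    StrictMono (fun j : Fin m => Ef pg.1.1 pg.1.2 (j : ℕ)) := by
  intro j1 j2 h
  exact Emono pg.1.1 pg.1.2 h j2.isLt

lemma EFin_eq (pg : PairsT m k) (f : Fin m → Fin k) (hf : phi pg = f)
    (hs : (Finset.image (enc f) Finset.univ).card = m) (j : Fin m) :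
    Ef pg.1.1 pg.1.2 (j : ℕ)
      = (Finset.image (enc f) Finset.univ).orderEmbOfFin hs j := by
  subst hf
  exact congrFun (Finset.orderEmbOfFin_unique hs (Ef_mem pg) (EFin_strictMono pg)) j

lemma gv_zero_eq (p : Equiv.Perm (Fin (m+1))) (g : Fin (m+1) → ℕ) :
    gv g 0 = Lf p g 0 := by
  unfold Lf Dlt
  simp

lemma phi_injective : Function.Injective (phi : PairsT m k → (Fin m → Fin k)) := by
  intro a b hab
  have hs : (Finset.image (enc (phi b)) Finset.univ).card = m := by
    rw [Finset.card_image_of_injective _ (enc_injective (phi b)), Finset.card_univ,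
      Fintype.card_fin]
  have hEf : ∀ j : ℕ, j < m → Ef a.1.1 a.1.2 j = Ef b.1.1 b.1.2 j := by
    intro j hj
    have h1 := EFin_eq a (phi b) hab hs ⟨j, hj⟩
    have h2 := EFin_eq b (phi b) rfl hs ⟨j, hj⟩
    exact h1.trans h2.symm
  have hperm : ∀ j : ℕ, permVal a.1.1 j = permVal b.1.1 j := by
    intro j
    rcases Nat.lt_or_ge j m with hj | hj
    · rw [← Ef_mod a.1.1 a.1.2 j, ← Ef_mod b.1.1 b.1.2 j, hEf j hj]
    rcases Nat.lt_or_ge j (m+1) with hj' | hj'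
    · have : j = m := by omega
      subst this
      rw [permVal_last a.2.1, permVal_last b.2.1]
    · unfold permVal
      rw [dif_neg (by omega), dif_neg (by omega)]
  have hp : a.1.1 = b.1.1 := by
    apply Equiv.ext
    intro j
    have := hperm (j : ℕ)
    unfold permVal at this
    rw [dif_pos j.isLt, dif_pos j.isLt] at this
    simpa [Fin.ext_iff] using this
  have hLf : ∀ j : ℕ, j < m → Lf a.1.1 a.1.2 j = Lf b.1.1 b.1.2 j := by
    intro j hj
    rw [← Ef_div a.1.1 a.1.2 j, ← Ef_div b.1.1 b.1.2 j, hEf j hj]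
  have hgv : ∀ i : ℕ, i < m → gv a.1.2 i = gv b.1.2 i := by
    intro i hi
    induction i with
    | zero => rw [gv_zero_eq a.1.1, gv_zero_eq b.1.1, hLf 0 hi]
    | succ j _ =>
      have e1 := Lstep a.1.1 a.1.2 j
      have e2 := Lstep b.1.1 b.1.2 j
      rw [hLf j (by omega), hLf (j+1) hi, hperm j, hperm (j+1)] at e1
      omega
  have hgvm : gv a.1.2 m = gv b.1.2 m := by
    have e1 := a.2.2
    have e2 := b.2.2
    rw [sum_g, Finset.sum_range_succ] at e1 e2
    rw [hp] at e1
    have e3 : (∑ i ∈ Finset.range m, gv a.1.2 i) = ∑ i ∈ Finset.range m, gv b.1.2 i :=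
      Finset.sum_congr rfl fun i hi => hgv i (Finset.mem_range.mp hi)
    omega
  have hg : a.1.2 = b.1.2 := by
    funext i
    have hi := i.isLt
    have key : gv a.1.2 (i : ℕ) = gv b.1.2 (i : ℕ) := by
      rcases Nat.lt_or_ge (i : ℕ) m with h | h
      · exact hgv _ h
      · have : (i : ℕ) = m := by omega
        rw [this]
        exact hgvm
    unfold gv at key
    rw [dif_pos hi, dif_pos hi] at key
    simpa using key
  exact Subtype.ext (Prod.ext hp hg)

section Surj

variable (f : Fin m → Fin k)

lemma card_image_enc : (Finset.image (enc f) Finset.univ).card = m := by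
  rw [Finset.card_image_of_injective _ (enc_injective f), Finset.card_univ, Fintype.card_fin]

/-- the sorted values -/
def EE (j : Fin m) : ℕ := (Finset.image (enc f) Finset.univ).orderEmbOfFin (card_image_enc f) j

lemma EE_strictMono : StrictMono (EE f) :=
  ((Finset.image (enc f) Finset.univ).orderEmbOfFin (card_image_enc f)).strictMono

lemma EE_mem (j : Fin m) : ∃ v : Fin m, enc f v = EE f j := by
  have := Finset.orderEmbOfFin_mem (Finset.image (enc f) Finset.univ) (card_image_enc f) j
  obtain ⟨v, -, hv⟩ := Finset.mem_image.mp this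
  exact ⟨v, hv⟩

/-- the sorting permutation of values -/
def dec (j : Fin m) : Fin m := Classical.choose (EE_mem f j)

lemma dec_spec (j : Fin m) : enc f (dec f j) = EE f j := Classical.choose_spec (EE_mem f j)

lemma dec_bijective : Function.Bijective (dec f) := by
  rw [← Finite.injective_iff_bijective]
  intro a b h
  exact (EE_strictMono f).injective <| by rw [← dec_spec f a, ← dec_spec f b, h]

def piEquiv : Equiv.Perm (Fin m) := Equiv.ofBijective (dec f) (dec_bijective f)

/-- the constructed permutation -/
def pC : Equiv.Perm (Fin (m+1)) :=
  (finSuccEquivLast.trans ((Equiv.optionCongr (piEquiv f)).trans (finSuccEquiv m).symm))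

lemma pC_last : pC f (Fin.last m) = 0 := by
  simp [pC, finSuccEquivLast_last]

lemma pC_castSucc (j : Fin m) : pC f (Fin.castSucc j) = (piEquiv f j).succ := by
  simp [pC, finSuccEquivLast_castSucc]

lemma permVal_pC {j : ℕ} (h : j < m) : permVal (pC f) j = ((piEquiv f) ⟨j, h⟩ : ℕ) + 1 := by
  unfold permVal
  rw [dif_pos (by omega : j < m + 1)]
  rw [show (⟨j, by omega⟩ : Fin (m+1)) = Fin.castSucc ⟨j, h⟩ from rfl, pC_castSucc]
  rfl

lemma EE_decomp {j : ℕ} (h : j < m) :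
    EE f ⟨j, h⟩ = (f (piEquiv f ⟨j, h⟩) : ℕ) * (m+1) + ((piEquiv f ⟨j, h⟩ : ℕ) + 1) := by
  rw [← dec_spec f ⟨j, h⟩]
  rfl

/-- the level function -/
def LC (t : ℕ) : ℕ := if h : t < m then (f (piEquiv f ⟨t, h⟩) : ℕ) else 0

lemma LC_lt {t : ℕ} (h : t < m) : LC f t < k := by
  unfold LC
  rw [dif_pos h]
  exact (f (piEquiv f ⟨t, h⟩)).isLt

lemma EE_decomp' {j : ℕ} (h : j < m) :
    EE f ⟨j, h⟩ = LC f j * (m+1) + ((piEquiv f ⟨j, h⟩ : ℕ) + 1) := by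
  rw [EE_decomp f h]
  unfold LC
  rw [dif_pos h]

lemma LC_mono {t t' : ℕ} (htt : t ≤ t') (h' : t' < m) : LC f t ≤ LC f t' := by
  have h : t < m := by omega
  have hEE : EE f ⟨t, h⟩ ≤ EE f ⟨t', h'⟩ := (EE_strictMono f).monotone (by exact htt)
  rw [EE_decomp' f h, EE_decomp' f h'] at hEE
  have h1 := ((piEquiv f) ⟨t, h⟩).isLt
  have h2 := ((piEquiv f) ⟨t', h'⟩).isLt
  by_contra hcon
  have : LC f t' + 1 ≤ LC f t := by omega
  have : (LC f t' + 1) * (m+1) ≤ LC f t * (m+1) := Nat.mul_le_mul_right _ this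
  nlinarith

lemma LC_gap {t : ℕ} (h0 : 0 < t) (h : t < m)
    (hd : permVal (pC f) t < permVal (pC f) (t-1)) : LC f (t-1) + 1 ≤ LC f t := by
  have h' : t - 1 < m := by omega
  rw [permVal_pC f h, permVal_pC f h'] at hd
  have hEE : EE f ⟨t-1, h'⟩ < EE f ⟨t, h⟩ := EE_strictMono f (by simp [Fin.lt_def]; omega)
  rw [EE_decomp' f h, EE_decomp' f h'] at hEE
  by_contra hcon
  have h1 : LC f t ≤ LC f (t-1) := by omega
  have h2 : LC f t * (m+1) ≤ LC f (t-1) * (m+1) := Nat.mul_le_mul_right _ h1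
  omega

/-- the constructed weights -/
def gC : Fin (m+1) → ℕ := fun i =>
  if (i : ℕ) = m then (if m = 0 then k else k - 1 - LC f (m-1))
  else if (i : ℕ) = 0 then LC f 0
  else LC f i - LC f ((i : ℕ) - 1)
    - (if permVal (pC f) i < permVal (pC f) ((i : ℕ) - 1) then 1 else 0)

lemma gv_gC {t : ℕ} (h : t < m + 1) : gv (gC f) t
    = if t = m then (if m = 0 then k else k - 1 - LC f (m-1))
      else if t = 0 then LC f 0
      else LC f t - LC f (t - 1)
        - (if permVal (pC f) t < permVal (pC f) (t - 1) then 1 else 0) := by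
  unfold gv gC
  rw [dif_pos h]

lemma Lf_eq_LC {j : ℕ} (h : j < m) : Lf (pC f) (gC f) j = LC f j := by
  induction j with
  | zero =>
    have : Lf (pC f) (gC f) 0 = gv (gC f) 0 := by
      unfold Lf Dlt
      simp
    rw [this, gv_gC f (by omega), if_neg (by omega), if_pos rfl]
  | succ j ih =>
    rw [Lstep, ih (by omega), gv_gC f (by omega), if_neg (by omega), if_neg (by omega)]
    have hgap : LC f j + (if permVal (pC f) (j+1) < permVal (pC f) j then 1 else 0)
        ≤ LC f (j+1) := by
      split_ifs with hd
      · have := LC_gap f (by omega : 0 < j + 1) h (by simpa using hd)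
        simpa using this
      · simpa using LC_mono f (by omega : j ≤ j + 1) h
    have : (j : ℕ) + 1 - 1 = j := by omega
    rw [this]
    omega

lemma sum_gC : (∑ i, gC f i) + desNum (pC f) = k := by
  rcases Nat.eq_zero_or_pos m with hm | hm
  · subst hm
    have h1 : (∑ i, gC f i) = gC f 0 := by
      rw [Fin.sum_univ_one]
    have h2 : gC f 0 = k := by
      unfold gC
      norm_num
    have h3 : desNum (pC f) = 0 := by
      unfold desNum
      simp
    rw [h1, h2, h3]
    omega
  · have e1 : (∑ i, gC f i) = (∑ i ∈ Finset.range m, gv (gC f) i) + gv (gC f) m := by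
      rw [sum_g, Finset.sum_range_succ]
    have e2 : desNum (pC f) = (Dlt (pC f) (m-1)).card + 1 := by
      rw [desNum_eq, card_Dlt_full (pC_last f) hm]
    have e3 : Lf (pC f) (gC f) (m-1) = (∑ i ∈ Finset.range m, gv (gC f) i)
        + (Dlt (pC f) (m-1)).card := by
      simp only [Lf, show m - 1 + 1 = m from by omega]
    have e4 : Lf (pC f) (gC f) (m-1) = LC f (m-1) := Lf_eq_LC f (by omega)
    have e5 : gv (gC f) m = k - 1 - LC f (m-1) := by
      rw [gv_gC f (by omega), if_pos rfl]
      rw [if_neg (by omega)]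
    have e6 : LC f (m-1) < k := LC_lt f (by omega)
    omega

/-- the constructed element of PairsT -/
def pairC : PairsT m k := ⟨(pC f, gC f), pC_last f, sum_gC f⟩

lemma phi_pairC : phi (pairC f) = f := by
  funext v
  apply Fin.ext
  show phiF (pC f) (gC f) v = (f v : ℕ)
  unfold phiF
  set jj := (pC f).symm v.succ with hjj
  have hjlt : (jj : ℕ) < m := pos_lt (pC_last f) v
  have hpv : piEquiv f ⟨(jj : ℕ), hjlt⟩ = v := by
    apply Fin.succ_injective
    rw [← pC_castSucc f]
    rw [show Fin.castSucc ⟨(jj : ℕ), hjlt⟩ = jj from Fin.ext rfl]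
    rw [hjj, Equiv.apply_symm_apply]
  rw [Lf_eq_LC f hjlt]
  unfold LC
  rw [dif_pos hjlt, hpv]

lemma phi_surjective : Function.Surjective (phi : PairsT m k → (Fin m → Fin k)) :=
  fun f => ⟨pairC f, phi_pairC f⟩

end Surj

lemma card_PairsT (m k : ℕ) : Nat.card (PairsT m k) = k ^ m := by
  rw [Nat.card_eq_of_bijective phi ⟨phi_injective, phi_surjective⟩,
    Nat.card_eq_fintype_card]
  simp

section Outer

variable {n : ℕ}

lemma card_min (σ : Equiv.Perm (Fin n)) (h : numCycles σ = m + 1) :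
    Fintype.card {x // IsCycleMin σ x} = m + 1 := by
  rw [Fintype.card_subtype]
  rw [← h]
  unfold numCycles
  congr 1

def minEquiv (σ : Equiv.Perm (Fin n)) (h : numCycles σ = m + 1) :
    Fin (m+1) ≃ {x // IsCycleMin σ x} :=
  (Fintype.equivFinOfCardEq (card_min σ h)).symm

lemma sum_min (σ : Equiv.Perm (Fin n)) (h : numCycles σ = m + 1) (w : Fin n → ℕ)
    (hw : ∀ y, ¬ IsCycleMin σ y → w y = 0) :
    (∑ i, w (minEquiv σ h i)) = ∑ x, w x := by
  rw [Equiv.sum_comp (minEquiv σ h) (fun x : {x // IsCycleMin σ x} => w x)]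
  rw [← Finset.sum_subtype (Finset.univ.filter fun x => IsCycleMin σ x)
    (fun x => by simp) (fun x => w x)]
  exact Finset.sum_subset (Finset.filter_subset _ _)
    (fun x _ hx => hw x (by simpa using hx))

def Tset (n m k : ℕ) : Set (Equiv.Perm (Fin n) × Equiv.Perm (Fin (m + 1)) × (Fin n → ℕ)) :=
  {spw | numCycles spw.1 = m + 1 ∧
    spw.2.1 ⟨m, Nat.lt_succ_self m⟩ = ⟨0, Nat.succ_pos m⟩ ∧
    (∀ y, ¬ IsCycleMin spw.1 y → spw.2.2 y = 0) ∧
    (∑ x, spw.2.2 x) + desNum spw.2.1 = k}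

lemma mk_zero_eq : (⟨0, Nat.succ_pos m⟩ : Fin (m+1)) = 0 := by
  apply Fin.ext
  simp

lemma mk_last_eq : (⟨m, Nat.lt_succ_self m⟩ : Fin (m+1)) = Fin.last m := rfl

def Psi (a : Tset n m k) : {σ : Equiv.Perm (Fin n) // numCycles σ = m + 1} × PairsT m k :=
  ⟨⟨a.1.1, a.2.1⟩,
   ⟨(a.1.2.1, fun i => a.1.2.2 (minEquiv a.1.1 a.2.1 i)),
    by rw [← mk_last_eq, a.2.2.1, mk_zero_eq],
    by rw [sum_min a.1.1 a.2.1 a.1.2.2 a.2.2.2.1]; exact a.2.2.2.2⟩⟩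

lemma Psi_injective : Function.Injective (Psi (n := n) (m := m) (k := k)) := by
  rintro ⟨⟨σ, p, w⟩, hσ, hp, hw, hs⟩ ⟨⟨σ', p', w'⟩, hσ', hp', hw', hs'⟩ hab
  simp only [Psi, PairsT, Prod.mk.injEq, Subtype.mk.injEq] at hab
  obtain ⟨h1, h2, h3⟩ := hab
  subst h1
  subst h2
  have hww : w = w' := by
    funext x
    by_cases hx : IsCycleMin σ x
    · have := congrFun h3 ((minEquiv σ hσ).symm ⟨x, hx⟩)
      simpa [Equiv.apply_symm_apply] using this
    · exact (hw x hx).trans (hw' x hx).symm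
  subst hww
  rfl

lemma Psi_surjective : Function.Surjective (Psi (n := n) (m := m) (k := k)) := by
  rintro ⟨⟨σ, hσ⟩, ⟨⟨p, g⟩, hpl, hsm⟩⟩
  set w : Fin n → ℕ := fun x =>
    if h : IsCycleMin σ x then g ((minEquiv σ hσ).symm ⟨x, h⟩) else 0 with hwdef
  have hw0 : ∀ y, ¬ IsCycleMin σ y → w y = 0 := fun y hy => dif_neg hy
  have hwmin : ∀ i, w (minEquiv σ hσ i) = g i := by
    intro i
    rw [hwdef]
    simp only
    rw [dif_pos (minEquiv σ hσ i).2]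
    congr 1
    rw [show (⟨(minEquiv σ hσ i : Fin n), (minEquiv σ hσ i).2⟩ : {x // IsCycleMin σ x})
        = minEquiv σ hσ i from Subtype.ext rfl]
    exact Equiv.symm_apply_apply _ _
  have hsum0 : (∑ x, w x) + desNum p = k := by
    rw [← sum_min σ hσ w hw0]
    calc (∑ i, w (minEquiv σ hσ i)) + desNum p
        = (∑ i, g i) + desNum p := by
          congr 1
          exact Finset.sum_congr rfl fun i _ => hwmin i
      _ = k := hsm
  refine ⟨⟨(σ, p, w), hσ, ?_, hw0, hsum0⟩, ?_⟩
  · rw [mk_last_eq, mk_zero_eq, hpl]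
  · exact Prod.ext rfl (Subtype.ext (Prod.ext rfl (funext fun i => hwmin i)))

lemma card_Tset (n m k : ℕ) :
    Nat.card (Tset n m k) = stirlingFirst n (m+1) * k ^ m := by
  rw [Nat.card_eq_of_bijective Psi ⟨Psi_injective, Psi_surjective⟩, Nat.card_prod,
    card_PairsT]
  congr 1
  rw [Nat.card_eq_fintype_card, Fintype.card_subtype]
  unfold stirlingFirst
  congr 1

end Outer
end CWP

/-- `k^m ⬝ [n, m+1]` counts the cycle-ordered, weighted permutations of `[n]` of type
`(n, m+1, k)`.  Here a cycle-ordered, weighted permutation is a triple `(σ, p, w)`,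
where `σ` is a permutation of `Fin n` with `m+1` cycles, `p` is a permutation of
`Fin (m+1)` sending the last element to the first (ordering the cycles of `σ`, with
the cycle of the smallest element last), and `w` is a weight function on the cycles
of `σ`, encoded as a function on `Fin n` vanishing off the minimal elements of the
cycles.  The type is `(n, m+1, k)` when the total weight plus `des(p)` equals `k`. -/
theorem pow_mul_stirling_eq_ncard (n m k : ℕ) (hn : 0 < n) (hm : m + 1 ≤ n)
    (hk : 0 < k) :
    k ^ m * stirlingFirst n (m + 1)
      = Set.ncard {spw : Equiv.Perm (Fin n) × Equiv.Perm (Fin (m + 1)) × (Fin n → ℕ) |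
          numCycles spw.1 = m + 1 ∧
          spw.2.1 ⟨m, Nat.lt_succ_self m⟩ = ⟨0, Nat.succ_pos m⟩ ∧
          (∀ y, ¬ IsCycleMin spw.1 y → spw.2.2 y = 0) ∧
          (∑ x, spw.2.2 x) + desNum spw.2.1 = k} := by
  have h1 : {spw : Equiv.Perm (Fin n) × Equiv.Perm (Fin (m + 1)) × (Fin n → ℕ) |
          numCycles spw.1 = m + 1 ∧
          spw.2.1 ⟨m, Nat.lt_succ_self m⟩ = ⟨0, Nat.succ_pos m⟩ ∧
          (∀ y, ¬ IsCycleMin spw.1 y → spw.2.2 y = 0) ∧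
          (∑ x, spw.2.2 x) + desNum spw.2.1 = k} = CWP.Tset n m k := rfl
  rw [h1, ← Nat.card_coe_set_eq, CWP.card_Tset n m k, Nat.mul_comm]

end
end
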